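/- If there exists a singular value λ̃ of M strictly larger than ‖v*‖, with singular vectors q_ν, q_μ, then for any α ∈ [0,1], β ∈ (0,1] with α² + β² = 1, setting g_ν = α p_ν + β q_ν and g_μ = α p_μ + β q_μ, the rank-one tensor Ū(g_ν, g_μ) = ⟨V̄(g_ν,g_μ), b⟩ V̄(g_ν,g_μ) satisfies f(Ū(g_ν,g_μ)) < f(v*). In particular −2‖b‖² f(Ū(g_ν,g_μ)) = (α² ‖v*‖ + β² λ̃)². -/

import Mathlib

open scoped BigOperators

/-- Rank-one tensor in `⊗_{μ} ℝ^{n μ}`, modeled as `EuclideanSpace ℝ (Π μ, Fin (n μ))`. -/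
noncomputable def rankOne {d : ℕ} (n : Fin d → ℕ)
    (p : ∀ μ, EuclideanSpace ℝ (Fin (n μ))) :
    EuclideanSpace ℝ (∀ μ, Fin (n μ)) :=
  WithLp.toLp 2 (fun i => ∏ μ, p μ (i μ))

/-- The objective function `f(v) = (1/‖b‖²)(½⟨v,v⟩ − ⟨b,v⟩)`. -/
noncomputable def fobj {ι : Type*} [Fintype ι] (b v : EuclideanSpace ℝ ι) : ℝ :=
  (1 / ‖b‖ ^ 2) * ((1 / 2) * (inner ℝ v v : ℝ) - (inner ℝ b v : ℝ))


/-- The rank-one tensor `V̄(g_ν, g_μ)` obtained from fixed vectors `p` by replacing the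
`ν`-th and `μ`-th components by `g_ν` and `g_μ`. -/
noncomputable def Vbar {d : ℕ} (n : Fin d → ℕ)
    (p : ∀ ξ, EuclideanSpace ℝ (Fin (n ξ))) (ν μ : Fin d)
    (gν : EuclideanSpace ℝ (Fin (n ν))) (gμ : EuclideanSpace ℝ (Fin (n μ))) :
    EuclideanSpace ℝ (∀ ξ, Fin (n ξ)) :=
  rankOne n (Function.update (Function.update p ν gν) μ gμ)



lemma inner_rankOne {d : ℕ} (n : Fin d → ℕ) (p q : ∀ μ, EuclideanSpace ℝ (Fin (n μ))) :
    (inner ℝ (rankOne n p) (rankOne n q) : ℝ) = ∏ ξ, (inner ℝ (p ξ) (q ξ) : ℝ) := by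
  simp only [rankOne, PiLp.inner_apply, RCLike.inner_apply, conj_trivial]
  rw [Finset.prod_univ_sum, Fintype.piFinset_univ]
  exact Finset.sum_congr rfl fun i _ => (Finset.prod_mul_distrib).symm

set_option maxHeartbeats 1000000 in
/-- If `M` has a singular value `λ̃ > ‖v*‖` with singular vectors `q_ν ⊥ p_ν`, `q_μ ⊥ p_μ`,
then along `g_ν = α p_ν + β q_ν`, `g_μ = α p_μ + β q_μ` (α² + β² = 1, β > 0) the rank-one
tensor `Ū(g_ν, g_μ)` satisfies `f(Ū) < f(v*)`, and `−2‖b‖² f(Ū) = (α²‖v*‖ + β²λ̃)²`. -/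
theorem stmt7 {d : ℕ} (n : Fin d → ℕ)
    (b : EuclideanSpace ℝ (∀ ξ, Fin (n ξ))) (hb : b ≠ 0)
    (p : ∀ ξ, EuclideanSpace ℝ (Fin (n ξ))) (hp : ∀ ξ, ‖p ξ‖ = 1)
    (ν μ : Fin d) (hνμ : ν ≠ μ)
    (lam : ℝ) (hlam0 : 0 ≤ lam)
    (v : EuclideanSpace ℝ (∀ ξ, Fin (n ξ)))
    (hv : v = lam • rankOne n p) (hlam : lam = ‖v‖)
    (hbv : (inner ℝ b v : ℝ) = ‖v‖ ^ 2)
    (M : EuclideanSpace ℝ (Fin (n ν)) →ₗ[ℝ] EuclideanSpace ℝ (Fin (n μ)))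
    (hM : ∀ (gν : EuclideanSpace ℝ (Fin (n ν))) (gμ : EuclideanSpace ℝ (Fin (n μ))),
      (inner ℝ (M gν) gμ : ℝ) = (inner ℝ (Vbar n p ν μ gν gμ) b : ℝ))
    (hMp : M (p ν) = lam • p μ)
    (hMpadj : (LinearMap.adjoint M) (p μ) = lam • p ν)
    (lt : ℝ) (hlt : lam < lt)
    (qν : EuclideanSpace ℝ (Fin (n ν))) (qμ : EuclideanSpace ℝ (Fin (n μ)))
    (hqν : ‖qν‖ = 1) (hqμ : ‖qμ‖ = 1)
    (hqνp : (inner ℝ qν (p ν) : ℝ) = 0) (hqμp : (inner ℝ qμ (p μ) : ℝ) = 0)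
    (hMq : M qν = lt • qμ) (hMqadj : (LinearMap.adjoint M) qμ = lt • qν)
    (α β : ℝ) (hα : α ∈ Set.Icc (0:ℝ) 1) (hβ : β ∈ Set.Ioc (0:ℝ) 1)
    (hαβ : α ^ 2 + β ^ 2 = 1) :
    fobj b ((inner ℝ (Vbar n p ν μ (α • p ν + β • qν) (α • p μ + β • qμ)) b : ℝ) •
        Vbar n p ν μ (α • p ν + β • qν) (α • p μ + β • qμ)) < fobj b v ∧
      -2 * ‖b‖ ^ 2 *
        fobj b ((inner ℝ (Vbar n p ν μ (α • p ν + β • qν) (α • p μ + β • qμ)) b : ℝ) •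
          Vbar n p ν μ (α • p ν + β • qν) (α • p μ + β • qμ))
        = (α ^ 2 * lam + β ^ 2 * lt) ^ 2 := by
  set gν := α • p ν + β • qν with hgν
  set gμ := α • p μ + β • qμ with hgμ
  set V := Vbar n p ν μ gν gμ with hV
  have hbnorm : (0:ℝ) < ‖b‖ := norm_pos_iff.mpr hb
  have hppν : (inner ℝ (p ν) (p ν) : ℝ) = 1 := by
    rw [real_inner_self_eq_norm_sq, hp ν]; norm_num
  have hppμ : (inner ℝ (p μ) (p μ) : ℝ) = 1 := by
    rw [real_inner_self_eq_norm_sq, hp μ]; norm_num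
  have hqqν : (inner ℝ qν qν : ℝ) = 1 := by
    rw [real_inner_self_eq_norm_sq, hqν]; norm_num
  have hqqμ : (inner ℝ qμ qμ : ℝ) = 1 := by
    rw [real_inner_self_eq_norm_sq, hqμ]; norm_num
  have hpqν : (inner ℝ (p ν) qν : ℝ) = 0 := by rw [real_inner_comm]; exact hqνp
  have hpqμ : (inner ℝ (p μ) qμ : ℝ) = 0 := by rw [real_inner_comm]; exact hqμp
  -- value of c
  have cval : (inner ℝ V b : ℝ) = α ^ 2 * lam + β ^ 2 * lt := by
    rw [hV, ← hM gν gμ, hgν, hgμ, map_add, map_smul, map_smul, hMp, hMq]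
    simp only [inner_add_left, inner_add_right, real_inner_smul_left, real_inner_smul_right,
      hppμ, hqqμ, hpqμ, hqμp]
    ring
  -- norm of gν and gμ
  have hgg : ∀ {m : ℕ} (x y : EuclideanSpace ℝ (Fin m)), (inner ℝ x x : ℝ) = 1 →
      (inner ℝ y y : ℝ) = 1 → (inner ℝ x y : ℝ) = 0 →
      (inner ℝ (α • x + β • y) (α • x + β • y) : ℝ) = 1 := by
    intro m x y hx hy hxy
    have hyx : (inner ℝ y x : ℝ) = 0 := by rw [real_inner_comm]; exact hxy
    simp only [inner_add_left, inner_add_right, real_inner_smul_left, real_inner_smul_right,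
      hx, hy, hxy, hyx]
    nlinarith [hαβ]
  -- norm of V
  have hVV : (inner ℝ V V : ℝ) = 1 := by
    rw [hV, Vbar, inner_rankOne]
    apply Finset.prod_eq_one
    intro ξ _
    by_cases hξμ : ξ = μ
    · subst hξμ
      rw [Function.update_self]
      exact hgg _ _ hppμ hqqμ hpqμ
    · rw [Function.update_of_ne hξμ]
      by_cases hξν : ξ = ν
      · subst hξν
        rw [Function.update_self]
        exact hgg _ _ hppν hqqν hpqν
      · rw [Function.update_of_ne hξν]
        rw [real_inner_self_eq_norm_sq, hp ξ]; norm_num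
  have hbV : (inner ℝ b V : ℝ) = α ^ 2 * lam + β ^ 2 * lt := by
    rw [real_inner_comm]; exact cval
  set c : ℝ := α ^ 2 * lam + β ^ 2 * lt with hc
  -- f(Ū)
  have hfU : fobj b ((inner ℝ V b : ℝ) • V) = -(c ^ 2) / (2 * ‖b‖ ^ 2) := by
    rw [fobj, cval, real_inner_smul_right, real_inner_smul_left, real_inner_smul_right,
      hVV, hbV]
    field_simp
    ring
  -- f(v)
  have hfv : fobj b v = -(lam ^ 2) / (2 * ‖b‖ ^ 2) := by
    have hvv : (inner ℝ v v : ℝ) = lam ^ 2 := by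
      rw [real_inner_self_eq_norm_sq, ← hlam]
    rw [fobj, hvv, hbv, ← hlam]
    field_simp
    ring
  have hclam : lam < c := by
    have : β ^ 2 * lam < β ^ 2 * lt := by
      exact mul_lt_mul_of_pos_left hlt (pow_pos hβ.1 2)
    nlinarith [hα.1, hα.2]
  have hc2 : lam ^ 2 < c ^ 2 := by nlinarith
  have h2b : (0:ℝ) < 2 * ‖b‖ ^ 2 := by positivity
  constructor
  · rw [hfU, hfv]
    exact (div_lt_div_iff_of_pos_right h2b).mpr (by nlinarith)
  · rw [hfU]
    field_simp
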